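/- Let (A, f) be a (2,1):1 structure and let c be a periodic element (f^[K](c) = c for some K > 0) that has two distinct preimages x₁ and x₂ under f. Then exactly one of x₁, x₂ is periodic, and the trees tree(x₁) = {a : ∃ n, f^[n](a) = x₁} and tree(x₂) = {a : ∃ n, f^[n](a) = x₂} are not equal; moreover, the tree of the periodic preimage contains a periodic point while the tree of the non-periodic preimage contains no periodic point. -/
import Mathlib


/-- If a periodic element `c` of a (2,1):1 structure has two distinct preimages,
then exactly one of them is periodic, their trees differ, and the tree of the
periodic preimage contains a periodic point while the tree of the non-periodic
preimage contains none. -/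
theorem stmt_7 {A : Type*} (f : A → A)
    (hfib : ∀ a : A, (f ⁻¹' {a}).ncard = 1 ∨ (f ⁻¹' {a}).ncard = 2)
    (c x₁ x₂ : A) (K : ℕ) (hK : 0 < K) (hc : f^[K] c = c)
    (hx : x₁ ≠ x₂) (h1 : f x₁ = c) (h2 : f x₂ = c) :
    (Xor' (∃ n : ℕ, 0 < n ∧ f^[n] x₁ = x₁) (∃ n : ℕ, 0 < n ∧ f^[n] x₂ = x₂)) ∧
    {a : A | ∃ n : ℕ, f^[n] a = x₁} ≠ {a : A | ∃ n : ℕ, f^[n] a = x₂} ∧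
    ((∃ n : ℕ, 0 < n ∧ f^[n] x₁ = x₁) →
      (∃ a ∈ {a : A | ∃ n : ℕ, f^[n] a = x₁}, ∃ n : ℕ, 0 < n ∧ f^[n] a = a) ∧
      (∀ a ∈ {a : A | ∃ n : ℕ, f^[n] a = x₂}, ∀ n : ℕ, 0 < n → f^[n] a ≠ a)) ∧
    ((∃ n : ℕ, 0 < n ∧ f^[n] x₂ = x₂) →
      (∃ a ∈ {a : A | ∃ n : ℕ, f^[n] a = x₂}, ∃ n : ℕ, 0 < n ∧ f^[n] a = a) ∧
      (∀ a ∈ {a : A | ∃ n : ℕ, f^[n] a = x₁}, ∀ n : ℕ, 0 < n → f^[n] a ≠ a)) := by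
  -- periodicity propagates forward along iterates
  have prop : ∀ (a b : A) (n : ℕ), f^[n] a = b →
      (∃ m, 0 < m ∧ f^[m] a = a) → (∃ m, 0 < m ∧ f^[m] b = b) := by
    rintro a b n hab ⟨m, hm, hma⟩
    refine ⟨m, hm, ?_⟩
    rw [← hab, ← Function.iterate_add_apply, Nat.add_comm m n,
      Function.iterate_add_apply, hma]
  -- a periodic preimage of c is unique
  have uniq : ∀ x y : A, f x = c → f y = c →
      (∃ m, 0 < m ∧ f^[m] x = x) → (∃ n, 0 < n ∧ f^[n] y = y) → x = y := by
    rintro x y hxc hyc ⟨m, hm, hmx⟩ ⟨n, hn, hny⟩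
    have hmn : 0 < m * n := Nat.mul_pos hm hn
    have hx' : f^[m * n] x = x := by
      rw [Function.iterate_mul]
      exact Function.iterate_fixed hmx n
    have hy' : f^[m * n] y = y := by
      rw [mul_comm, Function.iterate_mul]
      exact Function.iterate_fixed hny m
    have e1 : x = f^[m * n - 1] c := by
      conv_lhs => rw [← hx']
      rw [← Nat.succ_pred_eq_of_pos hmn, Function.iterate_succ_apply, hxc]
      simp
    have e2 : y = f^[m * n - 1] c := by
      conv_lhs => rw [← hy']
      rw [← Nat.succ_pred_eq_of_pos hmn, Function.iterate_succ_apply, hyc]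
      simp
    rw [e1, e2]
  -- every preimage of c is x₁ or x₂
  have fiber : ∀ y : A, f y = c → y = x₁ ∨ y = x₂ := by
    intro y hy
    by_contra h
    push_neg at h
    have hsub : ({y, x₁, x₂} : Set A) ⊆ f ⁻¹' {c} := by
      intro z hz
      simp only [Set.mem_insert_iff, Set.mem_singleton_iff] at hz
      rcases hz with rfl | rfl | rfl <;> simp [hy, h1, h2]
    have hfin : (f ⁻¹' {c}).Finite := by
      by_contra hinf
      rw [← Set.not_infinite, not_not] at hinf
      rcases hfib c with h' | h' <;> rw [Set.Infinite.ncard hinf] at h' <;> omega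
    have h3 : ({y, x₁, x₂} : Set A).ncard = 3 := by
      rw [Set.ncard_insert_of_notMem (by simp [h.1, h.2]), Set.ncard_pair hx]
    have hle := Set.ncard_le_ncard hsub hfin
    rcases hfib c with h' | h' <;> omega
  -- f^[K-1] c is a periodic preimage of c
  have hpc : f (f^[K - 1] c) = c := by
    rw [← Function.iterate_succ_apply' f (K - 1) c, Nat.succ_eq_add_one, Nat.sub_add_cancel hK, hc]
  have hpper : ∃ m, 0 < m ∧ f^[m] (f^[K - 1] c) = f^[K - 1] c := by
    refine ⟨K, hK, ?_⟩
    rw [← Function.iterate_add_apply, Nat.add_comm K (K - 1),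
      Function.iterate_add_apply, hc]
  -- the main dichotomy
  have key : ∀ y z : A, f y = c → f z = c → y ≠ z →
      (∃ m, 0 < m ∧ f^[m] y = y) →
      (¬ ∃ m, 0 < m ∧ f^[m] z = z) ∧
      {a : A | ∃ n, f^[n] a = y} ≠ {a : A | ∃ n, f^[n] a = z} ∧
      (∃ a ∈ {a : A | ∃ n, f^[n] a = y}, ∃ n, 0 < n ∧ f^[n] a = a) ∧
      (∀ a ∈ {a : A | ∃ n, f^[n] a = z}, ∀ n, 0 < n → f^[n] a ≠ a) := by
    intro y z hyc hzc hyz hyper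
    have hznp : ¬ ∃ m, 0 < m ∧ f^[m] z = z := fun hz => hyz (uniq y z hyc hzc hyper hz)
    have hnoper : ∀ a ∈ {a : A | ∃ n, f^[n] a = z}, ∀ n, 0 < n → f^[n] a ≠ a := by
      rintro a ⟨n, hn⟩ m hm hma
      exact hznp (prop a z n hn ⟨m, hm, hma⟩)
    refine ⟨hznp, ?_, ⟨y, ⟨0, rfl⟩, hyper⟩, hnoper⟩
    intro hEq
    have hy : y ∈ {a : A | ∃ n, f^[n] a = z} := hEq ▸ ⟨0, rfl⟩
    obtain ⟨n, hn⟩ := hy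
    exact hznp (prop y z n hn hyper)
  rcases fiber _ hpc with hp1 | hp2
  · have hper1 : ∃ m, 0 < m ∧ f^[m] x₁ = x₁ := hp1 ▸ hpper
    obtain ⟨hnp2, htne, hpos, hneg⟩ := key x₁ x₂ h1 h2 hx hper1
    exact ⟨Or.inl ⟨hper1, hnp2⟩, htne, fun _ => ⟨hpos, hneg⟩,
      fun h => absurd h hnp2⟩
  · have hper2 : ∃ m, 0 < m ∧ f^[m] x₂ = x₂ := hp2 ▸ hpper
    obtain ⟨hnp1, htne, hpos, hneg⟩ := key x₂ x₁ h2 h1 hx.symm hper2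
    exact ⟨Or.inr ⟨hper2, hnp1⟩, htne.symm, fun h => absurd h hnp1,
      fun _ => ⟨hpos, hneg⟩⟩
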